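/- There exists an absolute constant C > 0 such that for every three times continuously differentiable compactly supported g : ℝ³ → ℝ³, ∫_{ℝ³} |∇²g|⁴ dx ≤ C ∫_{ℝ³} |∇g|² |∇³g|² dx. -/

import Mathlib

open MeasureTheory

noncomputable section

/-- Euclidean three-space. -/
abbrev E3 := EuclideanSpace ℝ (Fin 3)

/-- The j-th partial derivative of a scalar function on ℝ³. -/
def pder (j : Fin 3) (f : E3 → ℝ) : E3 → ℝ :=
  fun x => fderiv ℝ f x (EuclideanSpace.single j 1)

/-- |∇v|², the squared Euclidean norm of the gradient of v : ℝ³ → ℝ³. -/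
def grad2 (v : E3 → E3) (x : E3) : ℝ :=
  ∑ i : Fin 3, ∑ j : Fin 3, (pder j (fun y => v y i) x) ^ 2

/-- |∇²v|², the squared norm of the second derivatives of v : ℝ³ → ℝ³. -/
def hess2 (v : E3 → E3) (x : E3) : ℝ :=
  ∑ i : Fin 3, ∑ j : Fin 3, ∑ k : Fin 3, (pder k (pder j (fun y => v y i)) x) ^ 2

/-- |∇³v|², the squared norm of the third derivatives of v : ℝ³ → ℝ³. -/
def third2 (v : E3 → E3) (x : E3) : ℝ :=
  ∑ i : Fin 3, ∑ j : Fin 3, ∑ k : Fin 3, ∑ l : Fin 3,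
    (pder l (pder k (pder j (fun y => v y i))) x) ^ 2

/- ## Auxiliary lemmas -/

lemma contDiff_pder {n : ℕ} {f : E3 → ℝ} (hf : ContDiff ℝ (n + 1 : ℕ) f) (j : Fin 3) :
    ContDiff ℝ (n : ℕ) (pder j f) := by
  have h : ContDiff ℝ (n : ℕ) (fderiv ℝ f) := hf.fderiv_right (by exact_mod_cast le_refl _)
  exact (ContinuousLinearMap.apply ℝ ℝ (EuclideanSpace.single j 1)).contDiff.comp h

lemma hcs_pder {f : E3 → ℝ} (hf : HasCompactSupport f) (j : Fin 3) :
    HasCompactSupport (pder j f) :=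
  (hf.fderiv (𝕜 := ℝ)).comp_left (g := fun L : E3 →L[ℝ] ℝ => L (EuclideanSpace.single j 1)) rfl

lemma pder_sum {ι : Type*} {s : Finset ι} {f : ι → E3 → ℝ} {x : E3}
    (h : ∀ i ∈ s, DifferentiableAt ℝ (f i) x) (k : Fin 3) :
    pder k (fun y => ∑ i ∈ s, f i y) x = ∑ i ∈ s, pder k (f i) x := by
  unfold pder
  rw [fderiv_fun_sum h]
  simp

lemma pder_mul {f h : E3 → ℝ} {x : E3} (hf : DifferentiableAt ℝ f x)
    (hh : DifferentiableAt ℝ h x) (k : Fin 3) :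
    pder k (fun y => f y * h y) x = pder k f x * h x + f x * pder k h x := by
  unfold pder
  rw [fderiv_fun_mul hf hh]
  simp
  ring

lemma sq_bound {t a h : ℝ} (ht : t ^ 2 ≤ a * h ^ 2) (ha : 0 ≤ a) : -t ≤ a + h ^ 2 / 4 := by
  nlinarith [sq_nonneg (a - h ^ 2 / 4), sq_nonneg (t + a + h ^ 2 / 4), sq_nonneg h, sq_nonneg t]

lemma hcs_sum {ι : Type*} (s : Finset ι) (f : ι → E3 → ℝ)
    (h : ∀ i ∈ s, HasCompactSupport (f i)) :
    HasCompactSupport (fun x => ∑ i ∈ s, f i x) := by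
  classical
  induction s using Finset.induction with
  | empty => simp only [Finset.sum_empty]; exact HasCompactSupport.zero
  | @insert a s ha ih =>
      simp only [Finset.sum_insert ha]
      exact (h a (Finset.mem_insert_self a s)).add
        (ih fun i hi => h i (Finset.mem_insert_of_mem hi))

lemma hcs_mul_left {f g : E3 → ℝ} (hg : HasCompactSupport g) :
    HasCompactSupport (fun x => f x * g x) := HasCompactSupport.mul_left hg

lemma hcs_mul_right {f g : E3 → ℝ} (hf : HasCompactSupport f) :
    HasCompactSupport (fun x => f x * g x) := HasCompactSupport.mul_right hf

lemma integral_pder_eq_zero {f : E3 → ℝ} (hf : ContDiff ℝ 1 f)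
    (hs : HasCompactSupport f) (k : Fin 3) : ∫ x, pder k f x = 0 := by
  obtain ⟨L, hL⟩ := ContDiff.lipschitzWith_of_hasCompactSupport hs hf one_ne_zero
  set K₀ : Set E3 := tsupport f ∪ Metric.closedBall 0 1 with hK₀def
  have hK₀ : IsCompact K₀ := hs.union (isCompact_closedBall 0 1)
  set K : Set E3 := Metric.cthickening 1 K₀ with hKdef
  have hK : IsCompact K := hK₀.cthickening
  have hKne : K.Nonempty := by
    refine ⟨0, Metric.self_subset_cthickening _ ?_⟩
    exact Or.inr (by simp)
  set φ : E3 → ℝ := fun x => max (1 - Metric.infDist x K) 0 with hφdef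
  have h1 : LipschitzWith 1 (fun t : ℝ => 1 - t) := by
    apply LipschitzWith.of_dist_le_mul
    intro s t
    rw [Real.dist_eq, Real.dist_eq, NNReal.coe_one, one_mul]
    apply le_of_eq
    rw [abs_sub_comm]
    congr 1
    ring
  have hφlip : LipschitzWith 1 φ := by
    have := ((h1.comp (Metric.lipschitz_infDist_pt K)).max_const 0)
    simpa using this
  have hφ1 : ∀ x ∈ K, φ x = 1 := by
    intro x hx
    simp [hφdef, Metric.infDist_zero_of_mem hx]
  have hφsupp : HasCompactSupport φ := by
    apply HasCompactSupport.intro (hK.cthickening)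
    intro x hx
    have hxK : 1 ≤ Metric.infDist x K := by
      by_contra h
      push_neg at h
      exact hx (Metric.thickening_subset_cthickening _ _
        ((Metric.mem_thickening_iff_infDist_lt hKne).2 h))
    simp only [hφdef]
    simp
    linarith
  have key := LipschitzWith.integral_lineDeriv_mul_eq (μ := volume) hL hφlip hφsupp
    (EuclideanSpace.single k 1)
  have hL1 : ∀ x, lineDeriv ℝ f x (EuclideanSpace.single k 1) * φ x = pder k f x := by
    intro x
    have hd : DifferentiableAt ℝ f x := hf.differentiable one_ne_zero x
    rw [hd.lineDeriv_eq_fderiv]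
    by_cases hx : x ∈ tsupport f
    · rw [hφ1 x (Metric.self_subset_cthickening _ (Or.inl hx))]
      simp [pder]
    · have h0 : fderiv ℝ f x = 0 := by
        by_contra h
        exact hx (support_fderiv_subset ℝ (Function.mem_support.2 h))
      simp [pder, h0]
  have hR : ∀ x, lineDeriv ℝ φ x (-(EuclideanSpace.single k 1)) * f x = 0 := by
    intro x
    by_cases hx : f x = 0
    · simp [hx]
    · have hxK₀ : x ∈ K₀ := Or.inl (subset_tsupport f (Function.mem_support.2 hx))
      have hball : ∀ y ∈ Metric.ball x 1, φ y = 1 := by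
        intro y hy
        apply hφ1
        apply Metric.thickening_subset_cthickening
        exact Metric.mem_thickening_iff.2 ⟨x, hxK₀, by simpa [Metric.mem_ball] using hy⟩
      have hev : φ =ᶠ[nhds x] (fun _ => (1 : ℝ)) := by
        filter_upwards [Metric.ball_mem_nhds x one_pos] with y hy using hball y hy
      have : lineDeriv ℝ φ x (-(EuclideanSpace.single k 1))
          = lineDeriv ℝ (fun _ => (1 : ℝ)) x (-(EuclideanSpace.single k 1)) :=
        Filter.EventuallyEq.lineDeriv_eq hev
      rw [this]
      simp [lineDeriv, deriv_const]
  simp_rw [hL1, hR] at key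
  simpa using key

/-- Cauchy–Schwarz for double sums over `Fin 3`. -/
lemma cs2 (F G : Fin 3 → Fin 3 → ℝ) :
    (∑ i : Fin 3, ∑ j : Fin 3, F i j * G i j) ^ 2 ≤
      (∑ i : Fin 3, ∑ j : Fin 3, (F i j) ^ 2) * (∑ i : Fin 3, ∑ j : Fin 3, (G i j) ^ 2) := by
  have h := Finset.sum_mul_sq_le_sq_mul_sq Finset.univ
    (fun p : Fin 3 × Fin 3 => F p.1 p.2) (fun p : Fin 3 × Fin 3 => G p.1 p.2)
  simpa [Fintype.sum_prod_type] using h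

/-- Cauchy–Schwarz for triple sums over `Fin 3`. -/
lemma cs3 (F G : Fin 3 → Fin 3 → Fin 3 → ℝ) :
    (∑ i : Fin 3, ∑ j : Fin 3, ∑ k : Fin 3, F i j k * G i j k) ^ 2 ≤
      (∑ i : Fin 3, ∑ j : Fin 3, ∑ k : Fin 3, (F i j k) ^ 2) *
      (∑ i : Fin 3, ∑ j : Fin 3, ∑ k : Fin 3, (G i j k) ^ 2) := by
  have h := Finset.sum_mul_sq_le_sq_mul_sq Finset.univ
    (fun p : Fin 3 × Fin 3 × Fin 3 => F p.1 p.2.1 p.2.2)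
    (fun p : Fin 3 × Fin 3 × Fin 3 => G p.1 p.2.1 p.2.2)
  simpa [Fintype.sum_prod_type] using h

theorem hess_fourth_power_bound :
    ∃ C : ℝ, 0 < C ∧ ∀ g : E3 → E3, ContDiff ℝ 3 g → HasCompactSupport g →
      ∫ x, (hess2 g x) ^ 2 ≤ C * ∫ x, grad2 g x * third2 g x := by
  classical
  refine ⟨14, by norm_num, ?_⟩
  intro g hg hsupp
  set v : Fin 3 → Fin 3 → E3 → ℝ := fun i j => pder j (fun y => g y i) with hvdef
  set u : Fin 3 → Fin 3 → Fin 3 → E3 → ℝ := fun i j k => pder k (v i j) with hudef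
  set w : Fin 3 → Fin 3 → Fin 3 → Fin 3 → E3 → ℝ := fun i j k l => pder l (u i j k) with hwdef
  -- smoothness of the components
  have haC : ∀ i : Fin 3, ContDiff ℝ ((3 : ℕ) : ℕ∞) (fun y => g y i) := by
    intro i
    have h3 : ContDiff ℝ 3 (fun y : E3 => g y i) :=
      (EuclideanSpace.proj (𝕜 := ℝ) i).contDiff.comp hg
    exact_mod_cast h3
  have hvC : ∀ i j, ContDiff ℝ ((2 : ℕ) : ℕ∞) (v i j) := fun i j =>
    contDiff_pder (n := 2) (haC i) j
  have huC : ∀ i j k, ContDiff ℝ ((1 : ℕ) : ℕ∞) (u i j k) := fun i j k =>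
    contDiff_pder (n := 1) (hvC i j) k
  have hwC : ∀ i j k l, ContDiff ℝ ((0 : ℕ) : ℕ∞) (w i j k l) := fun i j k l =>
    contDiff_pder (n := 0) (huC i j k) l
  have hvd : ∀ i j (x : E3), DifferentiableAt ℝ (v i j) x := fun i j x =>
    ((hvC i j).differentiable (by simp)) x
  have hud : ∀ i j k (x : E3), DifferentiableAt ℝ (u i j k) x := fun i j k x =>
    ((huC i j k).differentiable (by simp)) x
  have hvcont : ∀ i j, Continuous (v i j) := fun i j => (hvC i j).continuous
  have hucont : ∀ i j k, Continuous (u i j k) := fun i j k => (huC i j k).continuous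
  have hwcont : ∀ i j k l, Continuous (w i j k l) := fun i j k l => (hwC i j k l).continuous
  -- compact supports
  have haS : ∀ i : Fin 3, HasCompactSupport (fun y => g y i) := fun i =>
    hsupp.comp_left (g := fun z : E3 => z i) rfl
  have hvS : ∀ i j, HasCompactSupport (v i j) := fun i j => hcs_pder (haS i) j
  have huS : ∀ i j k, HasCompactSupport (u i j k) := fun i j k => hcs_pder (hvS i j) k
  have hwS : ∀ i j k l, HasCompactSupport (w i j k l) := fun i j k l => hcs_pder (huS i j k) l
  -- notations
  have hHeq : hess2 g = fun x => ∑ i : Fin 3, ∑ j : Fin 3, ∑ k : Fin 3, (u i j k x) ^ 2 := rfl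
  have hGeq : grad2 g = fun x => ∑ i : Fin 3, ∑ j : Fin 3, (v i j x) ^ 2 := rfl
  have hTeq : third2 g = fun x =>
      ∑ i : Fin 3, ∑ j : Fin 3, ∑ k : Fin 3, ∑ l : Fin 3, (w i j k l x) ^ 2 := rfl
  set A : Fin 3 → E3 → ℝ := fun k x => ∑ i : Fin 3, ∑ j : Fin 3, v i j x * u i j k x with hAdef
  set Φ : Fin 3 → E3 → ℝ := fun k x => A k x * hess2 g x with hΦdef
  set S : E3 → ℝ := fun x => ∑ i : Fin 3, ∑ j : Fin 3, ∑ k : Fin 3, v i j x * w i j k k x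
    with hSdef
  set B : Fin 3 → E3 → ℝ :=
    fun k x => ∑ i : Fin 3, ∑ j : Fin 3, ∑ r : Fin 3, 2 * (u i j r x * w i j r k x) with hBdef
  set P : E3 → ℝ := fun x => S x * hess2 g x + ∑ k : Fin 3, A k x * B k x with hPdef
  -- nonnegativity
  have hGpos : ∀ x, 0 ≤ grad2 g x := by
    intro x
    rw [hGeq]
    exact Finset.sum_nonneg fun i _ => Finset.sum_nonneg fun j _ => sq_nonneg _
  have hHpos : ∀ x, 0 ≤ hess2 g x := by
    intro x
    rw [hHeq]
    exact Finset.sum_nonneg fun i _ => Finset.sum_nonneg fun j _ =>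
      Finset.sum_nonneg fun k _ => sq_nonneg _
  have hTpos : ∀ x, 0 ≤ third2 g x := by
    intro x
    rw [hTeq]
    exact Finset.sum_nonneg fun i _ => Finset.sum_nonneg fun j _ =>
      Finset.sum_nonneg fun k _ => Finset.sum_nonneg fun l _ => sq_nonneg _
  -- regularity of the auxiliary functions
  have hone : ((1:ℕ) : ℕ∞) ≤ ((2:ℕ) : ℕ∞) := by exact_mod_cast (by norm_num : (1:ℕ) ≤ 2)
  have hHC1 : ContDiff ℝ ((1 : ℕ) : ℕ∞) (hess2 g) := by
    rw [hHeq]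
    exact ContDiff.sum fun i _ => ContDiff.sum fun j _ => ContDiff.sum fun k _ =>
      (huC i j k).pow 2
  have hAC1 : ∀ k, ContDiff ℝ ((1 : ℕ) : ℕ∞) (A k) := fun k =>
    ContDiff.sum fun i _ => ContDiff.sum fun j _ =>
      (((hvC i j).of_le (by exact_mod_cast hone)).mul (huC i j k))
  have hΦC1 : ∀ k, ContDiff ℝ ((1 : ℕ) : ℕ∞) (Φ k) := fun k => (hAC1 k).mul hHC1
  have hHS : HasCompactSupport (hess2 g) := by
    rw [hHeq]
    refine hcs_sum _ _ fun i _ => hcs_sum _ _ fun j _ => hcs_sum _ _ fun k _ => ?_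
    have : (fun x => (u i j k x) ^ 2) = fun x => u i j k x * u i j k x := by
      funext x; ring
    rw [this]
    exact hcs_mul_right (huS i j k)
  have hAS : ∀ k, HasCompactSupport (A k) := fun k =>
    hcs_sum _ _ fun i _ => hcs_sum _ _ fun j _ => hcs_mul_left (huS i j k)
  have hΦS : ∀ k, HasCompactSupport (Φ k) := fun k => hcs_mul_right (hAS k)
  have hTS : HasCompactSupport (third2 g) := by
    rw [hTeq]
    refine hcs_sum _ _ fun i _ => hcs_sum _ _ fun j _ => hcs_sum _ _ fun k _ =>
      hcs_sum _ _ fun l _ => ?_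
    have : (fun x => (w i j k l x) ^ 2) = fun x => w i j k l x * w i j k l x := by
      funext x; ring
    rw [this]
    exact hcs_mul_right (hwS i j k l)
  -- pointwise derivative identity
  have hHd : ∀ x, DifferentiableAt ℝ (hess2 g) x := fun x =>
    (hHC1.differentiable (by simp)) x
  have hAd : ∀ k (x : E3), DifferentiableAt ℝ (A k) x := fun k x =>
    ((hAC1 k).differentiable (by simp)) x
  have pderA : ∀ k (x : E3), pder k (A k) x =
      (∑ i : Fin 3, ∑ j : Fin 3, u i j k x * u i j k x) +
      (∑ i : Fin 3, ∑ j : Fin 3, v i j x * w i j k k x) := by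
    intro k x
    have h1 : pder k (A k) x = ∑ i : Fin 3, pder k (fun y => ∑ j : Fin 3, v i j y * u i j k y) x :=
      pder_sum (fun i _ => DifferentiableAt.fun_sum fun j _ => (hvd i j x).mul (hud i j k x)) k
    rw [h1]
    have h2 : ∀ i : Fin 3, pder k (fun y => ∑ j : Fin 3, v i j y * u i j k y) x
        = ∑ j : Fin 3, (u i j k x * u i j k x + v i j x * w i j k k x) := by
      intro i
      have h3 : pder k (fun y => ∑ j : Fin 3, v i j y * u i j k y) x
          = ∑ j : Fin 3, pder k (fun y => v i j y * u i j k y) x :=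
        pder_sum (fun j _ => (hvd i j x).mul (hud i j k x)) k
      rw [h3]
      exact Finset.sum_congr rfl fun j _ => pder_mul (hvd i j x) (hud i j k x) k
    simp_rw [h2]
    rw [← Finset.sum_add_distrib]
    exact Finset.sum_congr rfl fun i _ => Finset.sum_add_distrib
  have pderH : ∀ k (x : E3), pder k (hess2 g) x = B k x := by
    intro k x
    have h1 : pder k (hess2 g) x
        = ∑ i : Fin 3, pder k (fun y => ∑ j : Fin 3, ∑ r : Fin 3, (u i j r y) ^ 2) x :=
      pder_sum (fun i _ => DifferentiableAt.fun_sum fun j _ => DifferentiableAt.fun_sum fun r _ =>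
        (hud i j r x).pow 2) k
    rw [h1, hBdef]
    refine Finset.sum_congr rfl fun i _ => ?_
    have h2 : pder k (fun y => ∑ j : Fin 3, ∑ r : Fin 3, (u i j r y) ^ 2) x
        = ∑ j : Fin 3, pder k (fun y => ∑ r : Fin 3, (u i j r y) ^ 2) x :=
      pder_sum (fun j _ => DifferentiableAt.fun_sum fun r _ => (hud i j r x).pow 2) k
    rw [h2]
    refine Finset.sum_congr rfl fun j _ => ?_
    have h3 : pder k (fun y => ∑ r : Fin 3, (u i j r y) ^ 2) x
        = ∑ r : Fin 3, pder k (fun y => (u i j r y) ^ 2) x :=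
      pder_sum (fun r _ => (hud i j r x).pow 2) k
    rw [h3]
    refine Finset.sum_congr rfl fun r _ => ?_
    have h4 : (fun y => (u i j r y) ^ 2) = fun y => u i j r y * u i j r y := by
      funext y; ring
    rw [h4, pder_mul (hud i j r x) (hud i j r x) k]
    show w i j r k x * u i j r x + u i j r x * w i j r k x = 2 * (u i j r x * w i j r k x)
    ring
  have claim2 : ∀ x, (∑ k : Fin 3, pder k (Φ k) x) = hess2 g x ^ 2 + P x := by
    intro x
    have e1 : ∀ k, pder k (Φ k) x
        = pder k (A k) x * hess2 g x + A k x * pder k (hess2 g) x := fun k =>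
      pder_mul (hAd k x) (hHd x) k
    simp_rw [e1, pderA, pderH]
    have e2 : ∑ k : Fin 3, ∑ i : Fin 3, ∑ j : Fin 3, u i j k x * u i j k x = hess2 g x := by
      rw [hHeq, Finset.sum_comm]
      refine Finset.sum_congr rfl fun i _ => ?_
      rw [Finset.sum_comm]
      exact Finset.sum_congr rfl fun j _ => Finset.sum_congr rfl fun k _ => (sq (u i j k x)).symm
    have e3 : ∑ k : Fin 3, ∑ i : Fin 3, ∑ j : Fin 3, v i j x * w i j k k x = S x := by
      rw [hSdef, Finset.sum_comm]
      refine Finset.sum_congr rfl fun i _ => ?_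
      rw [Finset.sum_comm]
    calc ∑ k : Fin 3, (((∑ i : Fin 3, ∑ j : Fin 3, u i j k x * u i j k x) +
            ∑ i : Fin 3, ∑ j : Fin 3, v i j x * w i j k k x) * hess2 g x + A k x * B k x)
        = (∑ k : Fin 3, ∑ i : Fin 3, ∑ j : Fin 3, u i j k x * u i j k x) * hess2 g x
          + (∑ k : Fin 3, ∑ i : Fin 3, ∑ j : Fin 3, v i j x * w i j k k x) * hess2 g x
          + ∑ k : Fin 3, A k x * B k x := by
          simp_rw [add_mul]
          rw [Finset.sum_add_distrib, Finset.sum_add_distrib, ← Finset.sum_mul,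
            ← Finset.sum_mul]
      _ = hess2 g x ^ 2 + P x := by
          rw [e2, e3, hPdef]
          ring
  -- Cauchy-Schwarz bounds
  have hS2 : ∀ x, S x ^ 2 ≤ (3 * grad2 g x) * third2 g x := by
    intro x
    have cs := cs3 (fun i j _ => v i j x) (fun i j k => w i j k k x)
    have hX : ∑ i : Fin 3, ∑ j : Fin 3, ∑ _k : Fin 3, (v i j x) ^ 2 = 3 * grad2 g x := by
      rw [hGeq, Finset.mul_sum]
      refine Finset.sum_congr rfl fun i _ => ?_
      rw [Finset.mul_sum]
      refine Finset.sum_congr rfl fun j _ => ?_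
      simp [Finset.sum_const, Finset.card_univ]
    have hY : ∑ i : Fin 3, ∑ j : Fin 3, ∑ k : Fin 3, (w i j k k x) ^ 2 ≤ third2 g x := by
      rw [hTeq]
      refine Finset.sum_le_sum fun i _ => Finset.sum_le_sum fun j _ =>
        Finset.sum_le_sum fun k _ => ?_
      exact Finset.single_le_sum (fun l _ => sq_nonneg (w i j k l x)) (Finset.mem_univ k)
    have hXpos : (0:ℝ) ≤ 3 * grad2 g x := by have := hGpos x; linarith
    calc S x ^ 2 ≤ (∑ i : Fin 3, ∑ j : Fin 3, ∑ _k : Fin 3, (v i j x) ^ 2) *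
          (∑ i : Fin 3, ∑ j : Fin 3, ∑ k : Fin 3, (w i j k k x) ^ 2) := cs
      _ ≤ (3 * grad2 g x) * third2 g x := by
          rw [hX]
          exact mul_le_mul_of_nonneg_left hY hXpos
  have hA2 : ∀ x, ∑ k : Fin 3, A k x ^ 2 ≤ grad2 g x * hess2 g x := by
    intro x
    have h1 : ∀ k : Fin 3, A k x ^ 2 ≤
        grad2 g x * (∑ i : Fin 3, ∑ j : Fin 3, (u i j k x) ^ 2) := by
      intro k
      have cs := cs2 (fun i j => v i j x) (fun i j => u i j k x)
      rw [hGeq]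
      exact cs
    calc ∑ k : Fin 3, A k x ^ 2
        ≤ ∑ k : Fin 3, grad2 g x * (∑ i : Fin 3, ∑ j : Fin 3, (u i j k x) ^ 2) :=
          Finset.sum_le_sum fun k _ => h1 k
      _ = grad2 g x * ∑ k : Fin 3, ∑ i : Fin 3, ∑ j : Fin 3, (u i j k x) ^ 2 := by
          rw [Finset.mul_sum]
      _ = grad2 g x * hess2 g x := by
          congr 1
          rw [hHeq, Finset.sum_comm]
          refine Finset.sum_congr rfl fun i _ => ?_
          rw [Finset.sum_comm]
  have hB2 : ∀ x, ∑ k : Fin 3, B k x ^ 2 ≤ 4 * (hess2 g x * third2 g x) := by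
    intro x
    have hBform : ∀ k : Fin 3, B k x
        = 2 * ∑ i : Fin 3, ∑ j : Fin 3, ∑ r : Fin 3, u i j r x * w i j r k x := by
      intro k
      rw [hBdef, Finset.mul_sum]
      refine Finset.sum_congr rfl fun i _ => ?_
      rw [Finset.mul_sum]
      refine Finset.sum_congr rfl fun j _ => ?_
      rw [Finset.mul_sum]
    have h1 : ∀ k : Fin 3, B k x ^ 2 ≤ 4 * (hess2 g x *
        (∑ i : Fin 3, ∑ j : Fin 3, ∑ r : Fin 3, (w i j r k x) ^ 2)) := by
      intro k
      have cs := cs3 (fun i j r => u i j r x) (fun i j r => w i j r k x)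
      rw [hBform k]
      rw [hHeq]
      nlinarith [cs]
    calc ∑ k : Fin 3, B k x ^ 2
        ≤ ∑ k : Fin 3, 4 * (hess2 g x *
            (∑ i : Fin 3, ∑ j : Fin 3, ∑ r : Fin 3, (w i j r k x) ^ 2)) :=
          Finset.sum_le_sum fun k _ => h1 k
      _ = 4 * (hess2 g x *
            ∑ k : Fin 3, ∑ i : Fin 3, ∑ j : Fin 3, ∑ r : Fin 3, (w i j r k x) ^ 2) := by
          simp_rw [Finset.mul_sum]
      _ = 4 * (hess2 g x * third2 g x) := by
          congr 2
          rw [hTeq, Finset.sum_comm]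
          refine Finset.sum_congr rfl fun i _ => ?_
          rw [Finset.sum_comm]
          refine Finset.sum_congr rfl fun j _ => ?_
          rw [Finset.sum_comm]
  have hABcs : ∀ x, (∑ k : Fin 3, A k x * B k x) ^ 2
      ≤ (4 * (grad2 g x * third2 g x)) * hess2 g x ^ 2 := by
    intro x
    have cs := Finset.sum_mul_sq_le_sq_mul_sq Finset.univ (fun k => A k x) (fun k => B k x)
    have hApos : (0:ℝ) ≤ ∑ k : Fin 3, A k x ^ 2 :=
      Finset.sum_nonneg fun k _ => sq_nonneg _
    have hBpos : (0:ℝ) ≤ ∑ k : Fin 3, B k x ^ 2 :=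
      Finset.sum_nonneg fun k _ => sq_nonneg _
    calc (∑ k : Fin 3, A k x * B k x) ^ 2
        ≤ (∑ k : Fin 3, A k x ^ 2) * (∑ k : Fin 3, B k x ^ 2) := cs
      _ ≤ (grad2 g x * hess2 g x) * (4 * (hess2 g x * third2 g x)) := by
          apply mul_le_mul (hA2 x) (hB2 x) hBpos
          exact mul_nonneg (hGpos x) (hHpos x)
      _ = (4 * (grad2 g x * third2 g x)) * hess2 g x ^ 2 := by ring
  -- pointwise estimate
  have hpoint : ∀ x, -P x ≤ 7 * (grad2 g x * third2 g x) + hess2 g x ^ 2 / 2 := by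
    intro x
    have ht1 : (S x * hess2 g x) ^ 2 ≤ (3 * (grad2 g x * third2 g x)) * hess2 g x ^ 2 := by
      nlinarith [hS2 x, sq_nonneg (hess2 g x)]
    have ha1 : (0:ℝ) ≤ 3 * (grad2 g x * third2 g x) := by
      have := mul_nonneg (hGpos x) (hTpos x); linarith
    have ha2 : (0:ℝ) ≤ 4 * (grad2 g x * third2 g x) := by
      have := mul_nonneg (hGpos x) (hTpos x); linarith
    have b1 := sq_bound ht1 ha1
    have b2 := sq_bound (hABcs x) ha2
    rw [hPdef]
    simp only
    linarith
  -- integrability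
  have hGcont : Continuous (grad2 g) := by
    rw [hGeq]
    exact continuous_finset_sum _ fun i _ => continuous_finset_sum _ fun j _ =>
      (hvcont i j).pow 2
  have hTcont : Continuous (third2 g) := by
    rw [hTeq]
    exact continuous_finset_sum _ fun i _ => continuous_finset_sum _ fun j _ =>
      continuous_finset_sum _ fun k _ => continuous_finset_sum _ fun l _ =>
        (hwcont i j k l).pow 2
  have hHcont : Continuous (hess2 g) := hHC1.continuous
  have hScont : Continuous S := by
    rw [hSdef]
    exact continuous_finset_sum _ fun i _ => continuous_finset_sum _ fun j _ =>
      continuous_finset_sum _ fun k _ => (hvcont i j).mul (hwcont i j k k)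
  have hBcont : ∀ k, Continuous (B k) := by
    intro k
    rw [hBdef]
    exact continuous_finset_sum _ fun i _ => continuous_finset_sum _ fun j _ =>
      continuous_finset_sum _ fun r _ =>
        (continuous_const.mul ((hucont i j r).mul (hwcont i j r k)))
  have hAcont : ∀ k, Continuous (A k) := fun k => (hAC1 k).continuous
  have hPcont : Continuous P := by
    rw [hPdef]
    exact (hScont.mul hHcont).add (continuous_finset_sum _ fun k _ =>
      (hAcont k).mul (hBcont k))
  have hSsupp : HasCompactSupport S := by
    rw [hSdef]
    exact hcs_sum _ _ fun i _ => hcs_sum _ _ fun j _ => hcs_sum _ _ fun k _ =>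
      hcs_mul_left (hwS i j k k)
  have hBsupp : ∀ k, HasCompactSupport (B k) := by
    intro k
    rw [hBdef]
    exact hcs_sum _ _ fun i _ => hcs_sum _ _ fun j _ => hcs_sum _ _ fun r _ => by
      have : (fun x => 2 * (u i j r x * w i j r k x))
          = fun x => (fun y => 2 * u i j r y) x * w i j r k x := by
        funext x; ring
      rw [this]
      exact hcs_mul_left (hwS i j r k)
  have hPsupp : HasCompactSupport P := by
    rw [hPdef]
    exact (hcs_mul_right hSsupp).add (hcs_sum _ _ fun k _ => hcs_mul_left (hBsupp k))
  have hH2supp : HasCompactSupport (fun x => hess2 g x ^ 2) := by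
    have : (fun x => hess2 g x ^ 2) = fun x => hess2 g x * hess2 g x := by funext x; ring
    rw [this]
    exact hcs_mul_right hHS
  have hintH2 : Integrable (fun x => hess2 g x ^ 2) volume :=
    (hHcont.pow 2).integrable_of_hasCompactSupport hH2supp
  have hintP : Integrable P volume := hPcont.integrable_of_hasCompactSupport hPsupp
  have hintGT : Integrable (fun x => grad2 g x * third2 g x) volume :=
    (hGcont.mul hTcont).integrable_of_hasCompactSupport (hcs_mul_left hTS)
  have hintΦ : ∀ k, Integrable (pder k (Φ k)) volume := by
    intro k
    have hc : Continuous (pder k (Φ k)) := by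
      have := contDiff_pder (n := 0) (hΦC1 k) k
      exact this.continuous
    exact hc.integrable_of_hasCompactSupport (hcs_pder (hΦS k) k)
  -- the divergence identity integrates to zero
  have hzero : ∫ x, (∑ k : Fin 3, pder k (Φ k) x) = 0 := by
    rw [integral_finset_sum _ fun k _ => hintΦ k]
    refine Finset.sum_eq_zero fun k _ => ?_
    exact integral_pder_eq_zero (by exact_mod_cast hΦC1 k) (hΦS k) k
  have key1 : ∫ x, (hess2 g x ^ 2 + P x) = 0 := by
    rw [show (fun x => hess2 g x ^ 2 + P x) = (fun x => ∑ k : Fin 3, pder k (Φ k) x) from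
      funext fun x => (claim2 x).symm]
    exact hzero
  have key2 : (∫ x, hess2 g x ^ 2) + ∫ x, P x = 0 := by
    rw [← integral_add hintH2 hintP]
    exact key1
  have key4 : ∫ x, (-P x) ≤ ∫ x, (7 * (grad2 g x * third2 g x) + hess2 g x ^ 2 / 2) := by
    refine integral_mono hintP.neg ((hintGT.const_mul 7).add (hintH2.div_const 2)) ?_
    intro x
    exact hpoint x
  have key5 : ∫ x, (7 * (grad2 g x * third2 g x) + hess2 g x ^ 2 / 2)
      = 7 * (∫ x, grad2 g x * third2 g x) + (∫ x, hess2 g x ^ 2) / 2 := by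
    rw [integral_add (hintGT.const_mul 7) (hintH2.div_const 2), integral_const_mul,
      integral_div]
  have key6 : ∫ x, (-P x) = - ∫ x, P x := integral_neg _
  linarith
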